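/- The coefficients C_m(v,i) = \sum_{j=i+1}^{m-v} m^{j-i} * S(m,v+j) * binom(v+j,v) * binom(j,i) satisfy the recurrence (v+1) * C_m(v+1, i) = (i+1) * C_m(v, i+1) for all nonnegative integers v, i with v + i + 2 \le m. -/

import Mathlib

/-- Unsigned Stirling numbers of the first kind: coefficients of the rising factorial. -/
noncomputable def stirling1 (m j : ℕ) : ℤ := (ascPochhammer ℤ m).coeff j

/-- The coefficients `C_m(v,i)`. -/
noncomputable def Ccoeff (m v i : ℕ) : ℤ :=
  ∑ j ∈ Finset.Icc (i + 1) (m - v),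
    (m : ℤ) ^ (j - i) * stirling1 m (v + j) * (Nat.choose (v + j) v) * (Nat.choose j i)

lemma key_choose (v i j : ℕ) :
    (v + 1) * Nat.choose (v + 1 + j) (v + 1) * Nat.choose j i
      = (i + 1) * Nat.choose (v + 1 + j) v * Nat.choose (j + 1) (i + 1) := by
  have h1 := Nat.add_one_mul_choose_eq (v + j) v
  have h2 := Nat.add_one_mul_choose_eq j i
  have h3 := Nat.choose_mul_succ_eq (v + j) v
  have e1 : v + 1 + j = v + j + 1 := by omega
  have e2 : v + j + 1 - v = j + 1 := by omega
  rw [e1]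
  rw [e2] at h3
  nlinarith [h1, h2, h3]

theorem Ccoeff_recurrence (m v i : ℕ) (hm : 0 < m) (h : v + i + 2 ≤ m) :
    ((v : ℤ) + 1) * Ccoeff m (v + 1) i = ((i : ℤ) + 1) * Ccoeff m v (i + 1) := by
  unfold Ccoeff
  rw [Finset.mul_sum, Finset.mul_sum]
  refine Finset.sum_nbij' (fun j => j + 1) (fun j => j - 1) ?_ ?_ ?_ ?_ ?_
  · intro a ha
    simp only [Finset.mem_Icc] at ha ⊢
    omega
  · intro a ha
    simp only [Finset.mem_Icc] at ha ⊢
    omega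
  · intro a ha
    show a + 1 - 1 = a
    omega
  · intro a ha
    simp only [Finset.mem_Icc] at ha
    show a - 1 + 1 = a
    omega
  · intro j hj
    have e1 : v + (j + 1) = v + 1 + j := by omega
    have e2 : j + 1 - (i + 1) = j - i := by omega
    rw [e1, e2]
    have hk := key_choose v i j
    have hkz : ((v : ℤ) + 1) * ((v + 1 + j).choose (v + 1)) * (j.choose i)
        = ((i : ℤ) + 1) * ((v + 1 + j).choose v) * ((j + 1).choose (i + 1)) := by
      exact_mod_cast hk
    linear_combination ((m : ℤ) ^ (j - i) * stirling1 m (v + 1 + j)) * hkz
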